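/- Suppose X is a Markov chain on ℝ₊ with E|r(X̃_j(x)) − r(X̃_{j+1}(x))|² ≤ c ρ^j E|X₁(x) − x|² for all j, and r(X̃_j(x)) → r(X̃_∞(x)) in L² where r(X̃_∞(x)) has law π∘r⁻¹. Then |E_x r_c(X_n)| ≤ c^{1/2} (ρ^{1/2})^n/(1 − ρ^{1/2}) · E^{1/2}|X₁(x) − x|², and in particular Σ_{n=0}^∞ |E_x r_c(X_n)| < ∞. -/

import Mathlib

open MeasureTheory Set ProbabilityTheory NNReal ENNReal Filter Topology

lemma sqrt_pow_aux {x : ℝ} (hx : 0 ≤ x) (n : ℕ) : Real.sqrt (x ^ n) = Real.sqrt x ^ n := by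
  induction n with
  | zero => simp
  | succ n ih => rw [pow_succ, Real.sqrt_mul (pow_nonneg hx n), ih, pow_succ]

lemma abs_integral_le_sqrt_sq {Ω : Type*} [MeasurableSpace Ω] (P : Measure Ω)
    [IsProbabilityMeasure P] {f : Ω → ℝ} (hf : MemLp f 2 P) :
    |∫ ω, f ω ∂P| ≤ Real.sqrt (∫ ω, f ω ^ 2 ∂P) := by
  have hv := variance_nonneg f P
  rw [variance_eq_sub hf] at hv
  have h1 : (∫ ω, f ω ∂P) ^ 2 ≤ ∫ ω, f ω ^ 2 ∂P := by
    have h2 : P[f ^ 2] = ∫ ω, f ω ^ 2 ∂P := by simp [Pi.pow_apply]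
    linarith [h2 ▸ hv]
  calc |∫ ω, f ω ∂P| = Real.sqrt ((∫ ω, f ω ∂P) ^ 2) := (Real.sqrt_sq_eq_abs _).symm
    _ ≤ _ := Real.sqrt_le_sqrt h1

/-- If `E|r(X̃_j(x)) − r(X̃_{j+1}(x))|² ≤ c ρ^j E|X₁(x) − x|²` for all `j`, and
`r(X̃_j(x)) → r(X̃_∞(x))` in `L²` where the limit has law `π ∘ r⁻¹`, then
`|E_x r_c(X_n)| ≤ c^{1/2} (ρ^{1/2})^n / (1 − ρ^{1/2}) · E^{1/2}|X₁(x) − x|²`, and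
in particular `Σ_n |E_x r_c(X_n)| < ∞`.  (The backward iterates `X̃_j(x)` have the
same marginal law as `X_j` under `P_x`, so `E_x r_c(X_n) = E r(X̃_n(x)) − πr`.) -/
theorem stmt_14 {Ω : Type*} [MeasurableSpace Ω] (P : Measure Ω) [IsProbabilityMeasure P]
    (bwd : ℕ → Ω → ℝ≥0 → ℝ≥0) (x : ℝ≥0)
    (hbwdmeas : ∀ n, Measurable (fun ω => bwd n ω x))
    (ρ c : ℝ) (hρ0 : 0 < ρ) (hρ1 : ρ < 1) (hc : 0 ≤ c)
    (r : ℝ≥0 → ℝ) (hrmeas : Measurable r)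
    (π : Measure ℝ≥0) [IsProbabilityMeasure π] (hrπ : Integrable r π)
    (hL2 : ∀ j, Integrable (fun ω => (r (bwd j ω x)) ^ 2) P)
    (hbound : ∀ j : ℕ,
      ∫ ω, (r (bwd j ω x) - r (bwd (j + 1) ω x)) ^ 2 ∂P
        ≤ c * ρ ^ j * ∫ ω, ((bwd 1 ω x : ℝ) - (x : ℝ)) ^ 2 ∂P)
    (Y : Ω → ℝ) (hYmeas : Measurable Y) (hYL2 : Integrable (fun ω => (Y ω) ^ 2) P)
    (hconv : Tendsto (fun j => ∫ ω, (r (bwd j ω x) - Y ω) ^ 2 ∂P) atTop (nhds 0))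
    (hYlaw : Measure.map Y P = Measure.map r π) :
    (∀ n : ℕ, |(∫ ω, r (bwd n ω x) ∂P) - ∫ w, r w ∂π|
        ≤ Real.sqrt c * (Real.sqrt ρ) ^ n / (1 - Real.sqrt ρ)
            * Real.sqrt (∫ ω, ((bwd 1 ω x : ℝ) - (x : ℝ)) ^ 2 ∂P)) ∧
    Summable (fun n : ℕ => |(∫ ω, r (bwd n ω x) ∂P) - ∫ w, r w ∂π|) := by
  set f : ℕ → Ω → ℝ := fun j ω => r (bwd j ω x) with hf
  set M : ℝ := ∫ ω, ((bwd 1 ω x : ℝ) - (x : ℝ)) ^ 2 ∂P with hMdef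
  have hM : 0 ≤ M := integral_nonneg fun ω => sq_nonneg _
  have hfm : ∀ j, MemLp (f j) 2 P := fun j =>
    (memLp_two_iff_integrable_sq ((hrmeas.comp (hbwdmeas j)).aestronglyMeasurable)).mpr (hL2 j)
  have hYm : MemLp Y 2 P := (memLp_two_iff_integrable_sq hYmeas.aestronglyMeasurable).mpr hYL2
  set a : ℕ → ℝ := fun j => ∫ ω, f j ω ∂P with ha
  -- law identification
  have hLY : ∫ ω, Y ω ∂P = ∫ w, r w ∂π := by
    have h1 : ∫ ω, Y ω ∂P = ∫ y, id y ∂(Measure.map Y P) :=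
      (integral_map hYmeas.aemeasurable aestronglyMeasurable_id).symm
    have h2 : ∫ y, id y ∂(Measure.map r π) = ∫ w, r w ∂π :=
      integral_map hrmeas.aemeasurable aestronglyMeasurable_id
    rw [h1, hYlaw, h2]
  -- convergence of a to the limit
  have haconv : Tendsto a atTop (𝓝 (∫ ω, Y ω ∂P)) := by
    rw [tendsto_iff_dist_tendsto_zero]
    have hb : ∀ j, dist (a j) (∫ ω, Y ω ∂P) ≤ Real.sqrt (∫ ω, (f j ω - Y ω) ^ 2 ∂P) := by
      intro j
      rw [Real.dist_eq, ← integral_sub ((hfm j).integrable one_le_two)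
        (hYm.integrable one_le_two)]
      exact abs_integral_le_sqrt_sq P ((hfm j).sub hYm)
    have hs : Tendsto (fun j => Real.sqrt (∫ ω, (f j ω - Y ω) ^ 2 ∂P)) atTop (𝓝 0) := by
      have := hconv.sqrt
      rwa [Real.sqrt_zero] at this
    exact squeeze_zero (fun j => dist_nonneg) hb hs
  have hρs1 : Real.sqrt ρ < 1 := by
    rw [show (1 : ℝ) = Real.sqrt 1 from (Real.sqrt_one).symm]
    exact Real.sqrt_lt_sqrt hρ0.le hρ1
  set d : ℕ → ℝ := fun j => Real.sqrt c * Real.sqrt M * (Real.sqrt ρ) ^ j with hd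
  have hdsum : Summable d :=
    (summable_geometric_of_lt_one (Real.sqrt_nonneg ρ) hρs1).mul_left _
  have hstep : ∀ j, dist (a j) (a (j + 1)) ≤ d j := by
    intro j
    rw [Real.dist_eq, ← integral_sub ((hfm j).integrable one_le_two)
      ((hfm (j + 1)).integrable one_le_two)]
    calc |∫ ω, (f j ω - f (j + 1) ω) ∂P|
        ≤ Real.sqrt (∫ ω, (f j ω - f (j + 1) ω) ^ 2 ∂P) :=
          abs_integral_le_sqrt_sq P ((hfm j).sub (hfm (j + 1)))
      _ ≤ Real.sqrt (c * ρ ^ j * M) := Real.sqrt_le_sqrt (hbound j)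
      _ = d j := by
          rw [Real.sqrt_mul (by positivity), Real.sqrt_mul hc,
            sqrt_pow_aux hρ0.le]
          ring
  have hmain : ∀ n, dist (a n) (∫ ω, Y ω ∂P) ≤
      Real.sqrt c * (Real.sqrt ρ) ^ n / (1 - Real.sqrt ρ) * Real.sqrt M := by
    intro n
    have h := dist_le_tsum_of_dist_le_of_tendsto d hstep hdsum haconv n
    have htsum : ∑' m, d (n + m) =
        Real.sqrt c * (Real.sqrt ρ) ^ n / (1 - Real.sqrt ρ) * Real.sqrt M := by
      have heq : ∀ m, d (n + m) =
          (Real.sqrt c * Real.sqrt M * (Real.sqrt ρ) ^ n) * (Real.sqrt ρ) ^ m := by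
        intro m; rw [hd]; simp only [pow_add]; ring
      calc ∑' m, d (n + m)
          = ∑' m : ℕ, (Real.sqrt c * Real.sqrt M * (Real.sqrt ρ) ^ n) * (Real.sqrt ρ) ^ m :=
            tsum_congr heq
        _ = (Real.sqrt c * Real.sqrt M * (Real.sqrt ρ) ^ n) * ∑' m : ℕ, (Real.sqrt ρ) ^ m :=
            tsum_mul_left
        _ = (Real.sqrt c * Real.sqrt M * (Real.sqrt ρ) ^ n) * (1 - Real.sqrt ρ)⁻¹ := by
            rw [tsum_geometric_of_lt_one (Real.sqrt_nonneg ρ) hρs1]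
        _ = Real.sqrt c * (Real.sqrt ρ) ^ n / (1 - Real.sqrt ρ) * Real.sqrt M := by
            rw [div_eq_mul_inv]; ring
    exact le_of_le_of_eq h htsum
  constructor
  · intro n
    have := hmain n
    rwa [Real.dist_eq, hLY] at this
  · refine Summable.of_nonneg_of_le (fun n => abs_nonneg _) (fun n => ?_)
      ((summable_geometric_of_lt_one (Real.sqrt_nonneg ρ) hρs1).mul_left
        (Real.sqrt c * Real.sqrt M / (1 - Real.sqrt ρ)))
    have h := hmain n
    rw [Real.dist_eq, hLY] at h
    calc |a n - ∫ w, r w ∂π|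
        ≤ Real.sqrt c * (Real.sqrt ρ) ^ n / (1 - Real.sqrt ρ) * Real.sqrt M := h
      _ = (Real.sqrt c * Real.sqrt M / (1 - Real.sqrt ρ)) * (Real.sqrt ρ) ^ n := by ring
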